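/- Let 𝔤 be a Lie algebroid over M of nonzero rank. If D : Γ(𝔤) → Γ(𝔤) is an ℝ-linear map and V a vector field on M satisfying (i) D([X,X']) = [D(X),X'] + [X,D(X')] and (ii) D(fX) = fD(X) + V(f)X for all sections X, X' and all f ∈ C∞(M), then necessarily ρ(D(X)) = [V, ρ(X)] for all X ∈ Γ(𝔤), where ρ denotes the anchor. -/

import Mathlib

open scoped Manifold Derivation

local notation "∞" => (⊤ : ℕ∞)

/-- A Lie algebroid over a manifold `N` (modelled on `I`).  The space of smooth sections `Γ` is
an abstract real Lie algebra and a module over the algebra `C^∞(N)` of smooth functions; vector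
fields on `N` are represented as derivations of `C^∞(N)`.  The fiberwise data (`F`, `ev`,
`anchorAt`) allows pointwise statements about sections and about the anchor as a bundle map. -/
structure LieAlgebroid {E : Type*} [NormedAddCommGroup E] [NormedSpace ℝ E] {H : Type*}
    [TopologicalSpace H] (I : ModelWithCorners ℝ E H) (N : Type*) [TopologicalSpace N]
    [ChartedSpace H N] : Type _ where
  /-- the space of (smooth) sections -/
  Γ : Type
  [instLieRing : LieRing Γ]
  [instLieAlg : LieAlgebra ℝ Γ]
  [instMod : Module C^∞⟮I, N; ℝ⟯ Γ]
  smul_compat : ∀ (r : ℝ) (f : C^∞⟮I, N; ℝ⟯) (X : Γ), (r • f) • X = r • (f • X)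
  /-- the anchor, with vector fields on `N` represented as derivations of `C^∞(N)` -/
  anchor : Γ →ₗ[C^∞⟮I, N; ℝ⟯] Derivation ℝ C^∞⟮I, N; ℝ⟯ C^∞⟮I, N; ℝ⟯
  anchor_bracket : ∀ X Y : Γ, anchor ⁅X, Y⁆ = ⁅anchor X, anchor Y⁆
  leibniz : ∀ (X Y : Γ) (f : C^∞⟮I, N; ℝ⟯), ⁅X, f • Y⁆ = f • ⁅X, Y⁆ + anchor X f • Y
  /-- the fibers of the underlying vector bundle -/
  F : N → Type
  [instFAdd : ∀ y, AddCommGroup (F y)]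
  [instFMod : ∀ y, Module ℝ (F y)]
  /-- evaluation of a section at a point -/
  ev : ∀ y : N, Γ →ₗ[ℝ] F y
  ev_smul : ∀ (f : C^∞⟮I, N; ℝ⟯) (X : Γ) (y : N), ev y (f • X) = f y • ev y X
  /-- the anchor at the level of fibers -/
  anchorAt : ∀ y : N, F y →ₗ[ℝ] PointDerivation I y
  evalAt_anchor : ∀ (X : Γ) (y : N),
    Derivation.evalAt y (anchor X) = anchorAt y (ev y X)

attribute [instance] LieAlgebroid.instLieRing LieAlgebroid.instLieAlg LieAlgebroid.instMod
  LieAlgebroid.instFAdd LieAlgebroid.instFMod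

/-- On a Lie algebroid `𝔤` of nonzero rank, any pair `(D, V)` satisfying the
derivation conditions (i) and (ii) automatically satisfies (iii):
`ρ(D(X)) = [V, ρ(X)]` for all sections `X`. -/
theorem statement2
    {E : Type*} [NormedAddCommGroup E] [NormedSpace ℝ E] {H : Type*} [TopologicalSpace H]
    {I : ModelWithCorners ℝ E H} {M : Type*} [TopologicalSpace M] [ChartedSpace H M]
    (𝔤 : LieAlgebroid I M)
    (hrank : ∀ x : M, ∃ v : 𝔤.F x, v ≠ 0)
    (D : 𝔤.Γ →ₗ[ℝ] 𝔤.Γ) (V : Derivation ℝ C^∞⟮I, M; ℝ⟯ C^∞⟮I, M; ℝ⟯)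
    (hD1 : ∀ X X' : 𝔤.Γ, D ⁅X, X'⁆ = ⁅D X, X'⁆ + ⁅X, D X'⁆)
    (hD2 : ∀ (f : C^∞⟮I, M; ℝ⟯) (X : 𝔤.Γ), D (f • X) = f • D X + V f • X) :
    ∀ X : 𝔤.Γ, 𝔤.anchor (D X) = ⁅V, 𝔤.anchor X⁆ := by
  intro X
  set ρ : 𝔤.Γ →ₗ[C^∞⟮I, M; ℝ⟯] Derivation ℝ C^∞⟮I, M; ℝ⟯ C^∞⟮I, M; ℝ⟯ := 𝔤.anchor with hρ
  -- key identity: for all g and Y, (ρ(DX)g + ρX(Vg) - V(ρX g)) • Y = 0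
  have key : ∀ (g : C^∞⟮I, M; ℝ⟯) (Y : 𝔤.Γ),
      (ρ (D X) g + ρ X (V g) - V (ρ X g)) • Y = 0 := by
    intro g Y
    have e1 : D ⁅X, g • Y⁆ = ⁅D X, g • Y⁆ + ⁅X, D (g • Y)⁆ := hD1 X (g • Y)
    rw [𝔤.leibniz X Y g, map_add, hD2, hD2, hD1, hD2, lie_add,
      𝔤.leibniz (D X) Y g, 𝔤.leibniz X (D Y) g, 𝔤.leibniz X Y (V g), smul_add] at e1
    linear_combination (norm := module) -e1
  -- consequence: h * ρ Y f' = 0 for all Y f'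
  have key2 : ∀ (g f' : C^∞⟮I, M; ℝ⟯) (Y : 𝔤.Γ),
      (ρ (D X) g + ρ X (V g) - V (ρ X g)) * (ρ Y f') = 0 := by
    intro g f' Y
    have e := congrArg (fun Z => (ρ Z) f') (key g Y)
    simpa [map_smul, smul_eq_mul] using e
  apply Derivation.ext
  intro f
  rw [Derivation.commutator_apply]
  obtain ⟨h, hh⟩ : ∃ h : C^∞⟮I, M; ℝ⟯, h = ρ (D X) f + ρ X (V f) - V (ρ X f) := ⟨_, rfl⟩
  have h1 : h * ρ (D X) f = 0 := by rw [hh]; exact key2 f f (D X)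
  have h2 : h * ρ X (V f) = 0 := by rw [hh]; exact key2 f (V f) X
  have h3 : h * ρ X f = 0 := by rw [hh]; exact key2 f f X
  have hl : (0 : C^∞⟮I, M; ℝ⟯) = h • V (ρ X f) + (ρ X f) • V h := by
    have := V.leibniz h (ρ X f)
    rw [h3, map_zero] at this
    exact this
  simp only [smul_eq_mul] at hl
  have hcube : h * h * h = 0 := by
    linear_combination h * h1 + h * h2 + h * hl + V h * h3 + h ^ 2 * hh
  have hzero : h = 0 := by
    ext y
    have e : (h * h * h) y = (0 : C^∞⟮I, M; ℝ⟯) y := by rw [hcube]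
    simp only [ContMDiffMap.coe_mul, Pi.mul_apply, ContMDiffMap.coe_zero, Pi.zero_apply] at e ⊢
    rcases mul_eq_zero.mp e with e' | e'
    · exact mul_self_eq_zero.mp e'
    · exact e'
  have hfin : ρ (D X) f + ρ X (V f) - V (ρ X f) = 0 := by rw [← hh]; exact hzero
  linear_combination hfin
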